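/- Let A be a symmetric matrix with nonnegative entries on a finite vertex set V, let C = {C₁,…,C_k} be a partition of V, let b ∈ V with block C(b), let Q = {q ∈ V : q ∉ C(b) and A[b,q] > 0} be the set of all inter-cluster neighbors of b (perturbation ratio α = 1), and let A' = A'_{−b} be the degree/volume-preserving perturbation of A at b with respect to Q. Then for every block C_m of the partition with assoc(C_m, V | A) > 0, the normalized association does not decrease: N_asso(C_m | A) ≤ N_asso(C_m | A'). -/
import Mathlib


open Finset

/-- Degree/volume-preserving perturbation of `A` at `b` with respect to `Q`. -/
noncomputable def perturb {V : Type*} [Fintype V] [DecidableEq V]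
    (A : V → V → ℝ) (b : V) (Q : Finset V) : V → V → ℝ := fun i j =>
  if i = b ∧ j = b then A b b + ∑ q ∈ Q, A b q
  else if i = b ∧ j ∈ Q then 0
  else if j = b ∧ i ∈ Q then 0
  else if i = j ∧ i ∈ Q then A i i + A b i
  else A i j

/-- `assoc(S, T | A) = ∑_{s∈S, t∈T} A[s,t]`. -/
noncomputable def assoc {V : Type*} (A : V → V → ℝ) (S T : Finset V) : ℝ :=
  ∑ s ∈ S, ∑ t ∈ T, A s t

/-- The block of the partition (given by the labelling `cl`) with label `m`. -/
def block {V ι : Type*} [Fintype V] [DecidableEq ι] (cl : V → ι) (m : ι) : Finset V :=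
  univ.filter fun i => cl i = m

/-- Normalized association of the block labelled `m`:
`N_asso(C_m | A) = assoc(C_m, C_m | A) / assoc(C_m, V | A)`. -/
noncomputable def Nasso {V ι : Type*} [Fintype V] [DecidableEq ι]
    (A : V → V → ℝ) (cl : V → ι) (m : ι) : ℝ :=
  assoc A (block cl m) (block cl m) / assoc A (block cl m) univ

/-- Weighted inter-cluster degree of `b`: `d_b^inter = ∑_{q ∉ C(b)} A[b,q]`. -/
noncomputable def dinter {V ι : Type*} [Fintype V] [DecidableEq ι]
    (A : V → V → ℝ) (cl : V → ι) (b : V) : ℝ :=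
  ∑ q ∈ univ.filter (fun q => cl q ≠ cl b), A b q

/-- The set `Q` of inter-cluster neighbors of `b` (perturbation ratio α = 1). -/
noncomputable def interNbrs {V ι : Type*} [Fintype V] [DecidableEq ι]
    (A : V → V → ℝ) (cl : V → ι) (b : V) : Finset V :=
  univ.filter fun q => cl q ≠ cl b ∧ 0 < A b q


section AuxStmt1
variable {V : Type*} [Fintype V] [DecidableEq V]

lemma rowsum_perturb (A : V → V → ℝ) (hsym : ∀ i j, A i j = A j i) (b : V) (Q : Finset V)
    (hb : b ∉ Q) (i : V) : ∑ j, perturb A b Q i j = ∑ j, A i j := by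
  have key : ∑ j, (perturb A b Q i j - A i j) = 0 := by
    rw [← Finset.sum_subset (Finset.subset_univ (insert b Q))]
    · by_cases hib : i = b
      · subst hib
        rw [Finset.sum_insert hb]
        have h1 : perturb A i Q i i - A i i = ∑ q ∈ Q, A i q := by
          simp [perturb]
        have h2 : ∀ q ∈ Q, perturb A i Q i q - A i q = -A i q := by
          intro q hq
          have hqb : q ≠ i := fun h => hb (h ▸ hq)
          simp [perturb, hq, hqb, hqb.symm]
        rw [h1, Finset.sum_congr rfl h2, Finset.sum_neg_distrib]
        ring
      · by_cases hiQ : i ∈ Q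
        · rw [Finset.sum_insert hb]
          have h1 : perturb A b Q i b - A i b = -A i b := by
            simp [perturb, hib, hiQ]
          have h2 : ∀ q ∈ Q, perturb A b Q i q - A i q =
              if q = i then A b i else 0 := by
            intro q hq
            by_cases hqi : q = i
            · subst hqi
              simp [perturb, hib, hiQ]
            · have hiq : i ≠ q := fun h => hqi h.symm
              have hqb : q ≠ b := fun h => hb (h ▸ hq)
              simp [perturb, hib, hiq, hqb, hqi]
          rw [h1, Finset.sum_congr rfl h2, Finset.sum_ite_eq' Q i (fun _ => A b i)]
          simp [hiQ, hsym i b]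
        · apply Finset.sum_eq_zero
          intro j hj
          have : perturb A b Q i j = A i j := by
            by_cases hjb : j = b
            · subst hjb; simp [perturb, hib, hiQ]
            · by_cases hij : i = j
              · subst hij; simp [perturb, hib, hiQ]
              · simp [perturb, hib, hiQ, hij, hjb]
          rw [this]; ring
    · intro j _ hj
      simp only [Finset.mem_insert, not_or] at hj
      have : perturb A b Q i j = A i j := by
        by_cases hib : i = b
        · subst hib
          have hij : i ≠ j := fun h => hj.1 h.symm
          simp [perturb, hj.1, hj.2, hij]
        · by_cases hiQ : i ∈ Q
          · by_cases hij : i = j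
            · exact absurd (hij ▸ hiQ) hj.2
            · simp [perturb, hib, hj.1, hij]
          · have hne : ¬ (i = j ∧ i ∈ Q) := fun h => hiQ h.2
            simp [perturb, hib, hiQ, hj.1, hne]
      rw [this]; ring
  have hsub := Finset.sum_sub_distrib (f := fun j => perturb A b Q i j) (g := A i)
    (s := (Finset.univ : Finset V))
  rw [hsub] at key
  linarith

end AuxStmt1

theorem stmt1 {V : Type*} [Fintype V] [DecidableEq V] {k : ℕ}
    (A : V → V → ℝ) (hsym : ∀ i j, A i j = A j i) (hnn : ∀ i j, 0 ≤ A i j)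
    (cl : V → Fin k) (hpart : Function.Surjective cl) (b : V) :
    ∀ m : Fin k, 0 < assoc A (block cl m) univ →
      Nasso A cl m ≤ Nasso (perturb A b (interNbrs A cl b)) cl m := by
  intro m hpos
  set Q := interNbrs A cl b with hQ
  have hbQ : b ∉ Q := by simp [hQ, interNbrs]
  have hden : assoc (perturb A b Q) (block cl m) univ = assoc A (block cl m) univ := by
    unfold assoc
    exact Finset.sum_congr rfl fun i _ => rowsum_perturb A hsym b Q hbQ i
  have hnum : assoc A (block cl m) (block cl m) ≤
      assoc (perturb A b Q) (block cl m) (block cl m) := by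
    unfold assoc
    apply Finset.sum_le_sum
    intro i hi
    apply Finset.sum_le_sum
    intro j hj
    simp only [block, Finset.mem_filter] at hi hj
    have hQcl : ∀ q ∈ Q, cl q ≠ cl b := by
      intro q hq; simp [hQ, interNbrs] at hq; exact hq.1
    unfold perturb
    split_ifs with h1 h2 h3 h4
    · rw [h1.1, h1.2]
      exact le_add_of_nonneg_right (Finset.sum_nonneg fun q _ => hnn b q)
    · exact absurd (h2.1 ▸ (hj.2.trans hi.2.symm) : cl j = cl b) (hQcl j h2.2)
    · exact absurd (h3.1 ▸ (hi.2.trans hj.2.symm) : cl i = cl b) (hQcl i h3.2)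
    · rw [← h4.1]
      exact le_add_of_nonneg_right (hnn b i)
    · exact le_refl _
  unfold Nasso
  rw [hden]
  exact (div_le_div_iff_of_pos_right hpos).mpr hnum
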